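/- arXiv:1408.0408 — 2 statements merged into one kernel-verified Lean document; each statement's English description precedes it below -/
import Mathlib

section
/- If G[U ∪ V] is a balanced bipartite graph with parts U and V each of order m, and every vertex has degree at least 3m/4, then G[U ∪ V] is bipanconnected: for every x ∈ U and y ∈ V there exist x–y paths of every odd length ℓ with 3 ≤ ℓ ≤ 2m−1, and for every pair x, y in the same part there exist x–y paths of every even length ℓ with 2 ≤ ℓ ≤ 2m−2. -/
set_option linter.unusedSectionVars false
set_option maxHeartbeats 2000000

open Finset

namespace BBP

variable {V : Type*} [Fintype V] [DecidableEq V] {G : SimpleGraph V} [DecidableRel G.Adj]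
variable {U W : Finset V} {m q : ℕ}
structure Setup (G : SimpleGraph V) [DecidableRel G.Adj] (U W : Finset V) (m q : ℕ) : Prop where
  disj : Disjoint U W
  cover : ∀ v : V, v ∈ U ∨ v ∈ W
  cardU : U.card = m
  cardW : W.card = m
  bip : ∀ a b : V, G.Adj a b → (a ∈ U ∧ b ∈ W) ∨ (a ∈ W ∧ b ∈ U)
  nonadjU : ∀ v ∈ U, (W.filter (fun w => ¬ G.Adj v w)).card ≤ q
  nonadjW : ∀ v ∈ W, (U.filter (fun u => ¬ G.Adj v u)).card ≤ q
  hq : 4 * q ≤ m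

lemma Setup.symm (S : Setup G U W m q) : Setup G W U m q where
  disj := S.disj.symm
  cover := fun v => (S.cover v).symm
  cardU := S.cardW
  cardW := S.cardU
  bip := fun a b h => (S.bip a b h).symm
  nonadjU := S.nonadjW
  nonadjW := S.nonadjU
  hq := S.hq

lemma Setup.notW (S : Setup G U W m q) {v : V} (hv : v ∈ U) : v ∉ W :=
  fun h => (Finset.disjoint_left.mp S.disj) hv h

lemma Setup.neUW (S : Setup G U W m q) {u w : V} (hu : u ∈ U) (hw : w ∈ W) : u ≠ w :=
  fun h => S.notW hu (h ▸ hw)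

/-- Build a path (as a Walk) from a function with adjacency and injectivity. -/
lemma exists_walk (p : ℕ → V) (L : ℕ)
    (hadj : ∀ i, i < L → G.Adj (p i) (p (i+1)))
    (hinj : ∀ i, i ≤ L → ∀ j, j ≤ L → p i = p j → i = j) :
    ∃ w : G.Walk (p 0) (p L), w.IsPath ∧ w.length = L := by
  suffices h : ∀ K, K ≤ L → ∃ w : G.Walk (p 0) (p K), w.IsPath ∧ w.length = K ∧
      ∀ v ∈ w.support, ∃ t, t ≤ K ∧ p t = v by
    obtain ⟨w, h1, h2, _⟩ := h L le_rfl
    exact ⟨w, h1, h2⟩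
  intro K
  induction K with
  | zero =>
    intro _
    exact ⟨SimpleGraph.Walk.nil, by simp, by simp, by simp⟩
  | succ K ih =>
    intro hK
    obtain ⟨w, hw1, hw2, hw3⟩ := ih (by omega)
    refine ⟨w.concat (hadj K (by omega)), ?_, ?_, ?_⟩
    · rw [SimpleGraph.Walk.isPath_def, SimpleGraph.Walk.support_concat]
      rw [List.nodup_append']
      refine ⟨hw1.support_nodup, List.nodup_singleton _, ?_⟩
      intro v hv hv'
      simp only [List.mem_singleton] at hv'
      subst hv'
      obtain ⟨t, ht, hpt⟩ := hw3 _ hv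
      have := hinj t (by omega) (K+1) (by omega) hpt
      omega
    · rw [SimpleGraph.Walk.length_concat]; omega
    · intro v hv
      rw [SimpleGraph.Walk.support_concat, List.mem_append] at hv
      rcases hv with hv | hv
      · obtain ⟨t, ht, hpt⟩ := hw3 _ hv
        exact ⟨t, by omega, hpt⟩
      · simp only [List.mem_singleton] at hv
        exact ⟨K+1, le_rfl, hv.symm⟩

/-- Replace an edge (k,k+1) of a path by a detour through two new vertices A, B. -/
lemma mech_replace (p : ℕ → V) (L k : ℕ) (hk : k < L)
    (hadj : ∀ i, i < L → G.Adj (p i) (p (i+1)))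
    (hinj : ∀ i, i ≤ L → ∀ j, j ≤ L → p i = p j → i = j)
    (A B : V) (hAB : A ≠ B)
    (hA : ∀ i, i ≤ L → p i ≠ A) (hB : ∀ i, i ≤ L → p i ≠ B)
    (h1 : G.Adj (p k) A) (h2 : G.Adj A B) (h3 : G.Adj B (p (k+1))) :
    ∃ p' : ℕ → V, (∀ i, i < L+2 → G.Adj (p' i) (p' (i+1))) ∧
      (∀ i, i ≤ L+2 → ∀ j, j ≤ L+2 → p' i = p' j → i = j) ∧
      p' 0 = p 0 ∧ p' (L+2) = p L := by
  set f : ℕ → V := fun t => if t ≤ k then p t else if t = k+1 then A else if t = k+2 then B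
    else p (t-2) with hf
  have e1 : ∀ t, t ≤ k → f t = p t := by intro t ht; simp only [hf]; rw [if_pos ht]
  have e2 : f (k+1) = A := by
    simp only [hf]; rw [if_neg (by omega)]; simp
  have e3 : f (k+2) = B := by
    simp only [hf]; rw [if_neg (by omega), if_neg (by omega)]; simp
  have e4 : ∀ t, k+3 ≤ t → f t = p (t-2) := by
    intro t ht; simp only [hf]; rw [if_neg (by omega), if_neg (by omega), if_neg (by omega)]
  refine ⟨f, ?_, ?_, ?_, ?_⟩
  · intro i hi
    rcases Nat.lt_or_ge i k with h | h
    · rw [e1 i (by omega), e1 (i+1) (by omega)]; exact hadj i (by omega)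
    rcases Nat.eq_or_lt_of_le h with h' | h'
    · subst h'; rw [e1 k le_rfl, e2]; exact h1
    rcases Nat.eq_or_lt_of_le h' with h'' | h''
    · rw [← h'', e2, e3]; exact h2
    rcases Nat.eq_or_lt_of_le h'' with h3' | h3'
    · rw [← h3', e3]
      rw [e4 (k+3) le_rfl]
      have : k+3-2 = k+1 := by omega
      rw [this]; exact h3
    · rw [e4 i (by omega), e4 (i+1) (by omega)]
      have : i+1-2 = (i-2)+1 := by omega
      rw [this]; exact hadj (i-2) (by omega)
  · intro i hi j hj h
    simp only [hf] at h
    split_ifs at h <;>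
      first
      | omega
      | (exact absurd h hAB)
      | (exact absurd h.symm hAB)
      | (exact absurd h (hA _ (by omega)))
      | (exact absurd h.symm (hA _ (by omega)))
      | (exact absurd h (hB _ (by omega)))
      | (exact absurd h.symm (hB _ (by omega)))
      | (have := hinj _ (by omega) _ (by omega) h; omega)
  · exact e1 0 (by omega)
  · rw [e4 (L+2) (by omega)]; congr 1

/-- Rotation: given two "parallel" hooks at positions i and j, insert A and B
reversing the middle segment. -/
lemma mech_rotate (p : ℕ → V) (L i j : ℕ) (hij : i + 2 ≤ j) (hjL : j + 1 ≤ L)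
    (hadj : ∀ t, t < L → G.Adj (p t) (p (t+1)))
    (hinj : ∀ s, s ≤ L → ∀ t, t ≤ L → p s = p t → s = t)
    (A B : V) (hAB : A ≠ B)
    (hA : ∀ t, t ≤ L → p t ≠ A) (hB : ∀ t, t ≤ L → p t ≠ B)
    (h1 : G.Adj (p i) A) (h2 : G.Adj A (p j)) (h3 : G.Adj (p (i+1)) B)
    (h4 : G.Adj B (p (j+1))) :
    ∃ p' : ℕ → V, (∀ t, t < L+2 → G.Adj (p' t) (p' (t+1))) ∧
      (∀ s, s ≤ L+2 → ∀ t, t ≤ L+2 → p' s = p' t → s = t) ∧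
      p' 0 = p 0 ∧ p' (L+2) = p L := by
  set f : ℕ → V := fun t => if t ≤ i then p t else if t = i+1 then A else if t ≤ j+1 then
    p (j+i+2-t) else if t = j+2 then B else p (t-2) with hf
  have e1 : ∀ t, t ≤ i → f t = p t := by intro t ht; simp only [hf]; rw [if_pos ht]
  have e2 : f (i+1) = A := by
    simp only [hf]; rw [if_neg (by omega)]; simp
  have e3 : ∀ t, i+2 ≤ t → t ≤ j+1 → f t = p (j+i+2-t) := by
    intro t h h'; simp only [hf]; rw [if_neg (by omega), if_neg (by omega), if_pos h']
  have e4 : f (j+2) = B := by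
    simp only [hf]; rw [if_neg (by omega), if_neg (by omega), if_neg (by omega)]; simp
  have e5 : ∀ t, j+3 ≤ t → f t = p (t-2) := by
    intro t ht; simp only [hf]
    rw [if_neg (by omega), if_neg (by omega), if_neg (by omega), if_neg (by omega)]
  refine ⟨f, ?_, ?_, ?_, ?_⟩
  · intro t ht
    rcases Nat.lt_or_ge t i with h | h
    · rw [e1 t (by omega), e1 (t+1) (by omega)]; exact hadj t (by omega)
    rcases Nat.eq_or_lt_of_le h with h' | h'
    · subst h'; rw [e1 i le_rfl, e2]; exact h1
    rcases Nat.eq_or_lt_of_le h' with h'' | h''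
    · rw [← h'', e2, e3 (i+2) le_rfl (by omega)]
      have : j+i+2-(i+2) = j := by omega
      rw [this]; exact h2
    · rcases Nat.lt_or_ge t (j+1) with hc | hc
      · rw [e3 t (by omega) (by omega), e3 (t+1) (by omega) (by omega)]
        have ea : j+i+2-t = (j+i+2-(t+1))+1 := by omega
        rw [ea]
        exact (hadj (j+i+2-(t+1)) (by omega)).symm
      rcases Nat.eq_or_lt_of_le hc with hc' | hc'
      · rw [← hc', e3 (j+1) (by omega) le_rfl, e4]
        have : j+i+2-(j+1) = i+1 := by omega
        rw [this]; exact h3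
      rcases Nat.eq_or_lt_of_le hc' with hc'' | hc''
      · rw [← hc'', e4, e5 (j+3) le_rfl]
        have : j+3-2 = j+1 := by omega
        rw [this]; exact h4
      · rw [e5 t (by omega), e5 (t+1) (by omega)]
        have : t+1-2 = (t-2)+1 := by omega
        rw [this]; exact hadj (t-2) (by omega)
  · intro s hs t ht h
    simp only [hf] at h
    split_ifs at h <;>
      first
      | omega
      | (exact absurd h hAB)
      | (exact absurd h.symm hAB)
      | (exact absurd h (hA _ (by omega)))
      | (exact absurd h.symm (hA _ (by omega)))
      | (exact absurd h (hB _ (by omega)))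
      | (exact absurd h.symm (hB _ (by omega)))
      | (have := hinj _ (by omega) _ (by omega) h; omega)
  · exact e1 0 (by omega)
  · rw [e5 (L+2) (by omega)]; congr 1

lemma alternation (S : Setup G U W m q) (p : ℕ → V) (L : ℕ)
    (hadj : ∀ i, i < L → G.Adj (p i) (p (i+1)))
    (h0 : p 0 ∈ U) :
    ∀ i, i ≤ L → (i % 2 = 0 → p i ∈ U) ∧ (i % 2 = 1 → p i ∈ W) := by
  intro i
  induction i with
  | zero => intro _; exact ⟨fun _ => h0, fun h => by omega⟩
  | succ n ih =>
    intro hle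
    have hn := ih (by omega)
    have ha := hadj n (by omega)
    rcases S.bip _ _ ha with ⟨hu, hw⟩ | ⟨hw, hu⟩
    · exact ⟨fun h => absurd (hn.2 (by omega)) (fun hc => S.notW hu hc), fun _ => hw⟩
    · exact ⟨fun _ => hu, fun h => absurd hw (fun hc => S.notW (hn.1 (by omega)) hc)⟩

lemma card_filter_mod2 (n : ℕ) :
    ((range n).filter (fun i => i % 2 = 0)).card = (n+1)/2 ∧
    ((range n).filter (fun i => i % 2 = 1)).card = n/2 := by
  induction n with
  | zero => simp
  | succ n ih =>
    rw [range_add_one, filter_insert, filter_insert]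
    by_cases h : n % 2 = 0
    · rw [if_pos h, if_neg (by omega), card_insert_of_notMem (by simp)]
      omega
    · rw [if_neg h, if_pos (by omega), card_insert_of_notMem (by simp)]
      omega

lemma extend (S : Setup G U W m q) (p : ℕ → V) (L : ℕ) (hL : 2 ≤ L)
    (hadj : ∀ i, i < L → G.Adj (p i) (p (i+1)))
    (hinj : ∀ i, i ≤ L → ∀ j, j ≤ L → p i = p j → i = j)
    (h0 : p 0 ∈ U)
    (haa : L/2 + 2 ≤ m) (hbb : (L+1)/2 + 1 ≤ m) :
    ∃ p' : ℕ → V, (∀ i, i < L+2 → G.Adj (p' i) (p' (i+1))) ∧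
      (∀ i, i ≤ L+2 → ∀ j, j ≤ L+2 → p' i = p' j → i = j) ∧
      p' 0 = p 0 ∧ p' (L+2) = p L := by
  by_contra hcon
  have halt := alternation S p L hadj h0
  set pathFin : Finset V := (range (L+1)).image p with hpathFin
  set pathU : Finset V := ((range (L+1)).filter (fun i => i % 2 = 0)).image p with hpathUdef
  set pathW : Finset V := ((range (L+1)).filter (fun i => i % 2 = 1)).image p with hpathWdef
  set offU : Finset V := U \ pathFin with hoffUdef
  set offW : Finset V := W \ pathFin with hoffWdef
  have hmemU : ∀ i, i ≤ L → i % 2 = 0 → p i ∈ pathU := fun i hi h =>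
    mem_image_of_mem p (mem_filter.mpr ⟨mem_range.mpr (by omega), h⟩)
  have hmemW : ∀ i, i ≤ L → i % 2 = 1 → p i ∈ pathW := fun i hi h =>
    mem_image_of_mem p (mem_filter.mpr ⟨mem_range.mpr (by omega), h⟩)
  have hpUsub : pathU ⊆ U := by
    intro v hv
    obtain ⟨i, hi, rfl⟩ := mem_image.mp hv
    have h' := mem_filter.mp hi
    have hr := mem_range.mp h'.1
    exact (halt i (by omega)).1 h'.2
  have hpWsub : pathW ⊆ W := by
    intro v hv
    obtain ⟨i, hi, rfl⟩ := mem_image.mp hv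
    have h' := mem_filter.mp hi
    have hr := mem_range.mp h'.1
    exact (halt i (by omega)).2 h'.2
  have hpUcard : pathU.card = L/2 + 1 := by
    rw [hpathUdef, card_image_of_injOn, (card_filter_mod2 (L+1)).1]
    · omega
    · intro a ha b hb hab
      have ha' := mem_range.mp (mem_filter.mp ha).1
      have hb' := mem_range.mp (mem_filter.mp hb).1
      exact hinj a (by omega) b (by omega) hab
  have hpWcard : pathW.card = (L+1)/2 := by
    rw [hpathWdef, card_image_of_injOn, (card_filter_mod2 (L+1)).2]
    · intro a ha b hb hab
      have ha' := mem_range.mp (mem_filter.mp ha).1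
      have hb' := mem_range.mp (mem_filter.mp hb).1
      exact hinj a (by omega) b (by omega) hab
  have hUsplit : U \ pathFin = U \ pathU := by
    ext v
    simp only [mem_sdiff]
    constructor
    · rintro ⟨hvU, hv⟩
      refine ⟨hvU, fun hc => hv ?_⟩
      obtain ⟨i, hi, rfl⟩ := mem_image.mp hc
      exact mem_image_of_mem p (mem_of_mem_filter i hi)
    · rintro ⟨hvU, hv⟩
      refine ⟨hvU, fun hc => ?_⟩
      obtain ⟨i, hi, rfl⟩ := mem_image.mp hc
      have hiL : i ≤ L := by have := mem_range.mp hi; omega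
      by_cases hpar : i % 2 = 0
      · exact hv (hmemU i hiL hpar)
      · exact S.notW hvU ((halt i hiL).2 (by omega))
  have hWsplit : W \ pathFin = W \ pathW := by
    ext v
    simp only [mem_sdiff]
    constructor
    · rintro ⟨hvW, hv⟩
      refine ⟨hvW, fun hc => hv ?_⟩
      obtain ⟨i, hi, rfl⟩ := mem_image.mp hc
      exact mem_image_of_mem p (mem_of_mem_filter i hi)
    · rintro ⟨hvW, hv⟩
      refine ⟨hvW, fun hc => ?_⟩
      obtain ⟨i, hi, rfl⟩ := mem_image.mp hc
      have hiL : i ≤ L := by have := mem_range.mp hi; omega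
      by_cases hpar : i % 2 = 1
      · exact hv (hmemW i hiL hpar)
      · exact S.notW ((halt i hiL).1 (by omega)) hvW
  have hoffUcard : offU.card + (L/2 + 1) = m := by
    rw [hoffUdef, hUsplit, card_sdiff_of_subset hpUsub, hpUcard, S.cardU]
    have := card_le_card hpUsub
    rw [hpUcard, S.cardU] at this
    omega
  have hoffWcard : offW.card + (L+1)/2 = m := by
    rw [hoffWdef, hWsplit, card_sdiff_of_subset hpWsub, hpWcard, S.cardW]
    have := card_le_card hpWsub
    rw [hpWcard, S.cardW] at this
    omega
  have hoffUmem : ∀ u' ∈ offU, u' ∈ U ∧ (∀ i, i ≤ L → p i ≠ u') := by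
    intro u' hu'
    have h' := mem_sdiff.mp hu'
    exact ⟨h'.1, fun i hi hc => h'.2 (hc ▸ mem_image_of_mem p (mem_range.mpr (by omega)))⟩
  have hoffWmem : ∀ w' ∈ offW, w' ∈ W ∧ (∀ i, i ≤ L → p i ≠ w') := by
    intro w' hw'
    have h' := mem_sdiff.mp hw'
    exact ⟨h'.1, fun i hi hc => h'.2 (hc ▸ mem_image_of_mem p (mem_range.mpr (by omega)))⟩
  set I1 : V → V → Finset ℕ := fun u' w' =>
    (range ((L+1)/2)).filter (fun k => G.Adj w' (p (2*k)) ∧ G.Adj u' (p (2*k+1))) with hI1def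
  -- mechanism A
  have HA : ∀ u' ∈ offU, ∀ w' ∈ offW, G.Adj u' w' →
      (I1 u' w' = ∅ ∧ ∀ k, k < L/2 → ¬(G.Adj u' (p (2*k+1)) ∧ G.Adj w' (p (2*k+2)))) := by
    intro u' hu' w' hw' hadj'
    obtain ⟨hu'U, hu'p⟩ := hoffUmem u' hu'
    obtain ⟨hw'W, hw'p⟩ := hoffWmem w' hw'
    constructor
    · rw [eq_empty_iff_forall_notMem]
      intro k hk
      simp only [hI1def, mem_filter, mem_range] at hk
      obtain ⟨hkn, hc1, hc2⟩ := hk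
      obtain ⟨p', h1', h2', h3', h4'⟩ := mech_replace p L (2*k) (by omega) hadj hinj w' u'
          (S.neUW hu'U hw'W).symm hw'p hu'p hc1.symm hadj'.symm hc2
      exact hcon ⟨p', h1', h2', h3', h4'⟩
    · intro k hk hc
      have hc2 : G.Adj w' (p (2*k+1+1)) := by
        have : 2*k+1+1 = 2*k+2 := by omega
        rw [this]; exact hc.2
      obtain ⟨p', h1', h2', h3', h4'⟩ := mech_replace p L (2*k+1) (by omega) hadj hinj u' w'
          (S.neUW hu'U hw'W) hu'p hw'p hc.1.symm hadj' hc2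
      exact hcon ⟨p', h1', h2', h3', h4'⟩
  -- mechanism B
  have HB : ∀ u' ∈ offU, ∀ w' ∈ offW, (I1 u' w').card ≤ 1 := by
    intro u' hu' w' hw'
    obtain ⟨hu'U, hu'p⟩ := hoffUmem u' hu'
    obtain ⟨hw'W, hw'p⟩ := hoffWmem w' hw'
    by_contra hc
    rw [not_le] at hc
    rw [Finset.one_lt_card] at hc
    obtain ⟨k1, hk1, k2, hk2, hne⟩ := hc
    have key : ∀ a b : ℕ, a ∈ I1 u' w' → b ∈ I1 u' w' → a < b → False := by
      intro a b ha hb hab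
      simp only [hI1def, mem_filter, mem_range] at ha hb
      have h4 : G.Adj u' (p (2*b+1)) := hb.2.2
      obtain ⟨p', h1', h2', h3', h4'⟩ := mech_rotate p L (2*a) (2*b) (by omega) (by omega)
          hadj hinj w' u' (S.neUW hu'U hw'W).symm hw'p hu'p
          ha.2.1.symm hb.2.1 ha.2.2.symm h4
      exact hcon ⟨p', h1', h2', h3', h4'⟩
    rcases Nat.lt_or_ge k1 k2 with h | h
    · exact key k1 k2 hk1 hk2 h
    · exact key k2 k1 hk2 hk1 (by omega)
  -- counting for I1
  have HC : ∀ u' ∈ U, ∀ w' ∈ W, (L+1)/2 ≤ (I1 u' w').card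
      + (pathU.filter (fun v => ¬ G.Adj w' v)).card
      + (pathW.filter (fun v => ¬ G.Adj u' v)).card := by
    intro u' hu' w' hw'
    set bad1 := (range ((L+1)/2)).filter (fun k => ¬ G.Adj w' (p (2*k))) with hb1
    set bad2 := (range ((L+1)/2)).filter (fun k => ¬ G.Adj u' (p (2*k+1))) with hb2
    have hsub : range ((L+1)/2) ⊆ I1 u' w' ∪ (bad1 ∪ bad2) := by
      intro k hk
      simp only [hI1def, hb1, hb2, mem_union, mem_filter]
      by_cases c1 : G.Adj w' (p (2*k)) <;> by_cases c2 : G.Adj u' (p (2*k+1)) <;> tauto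
    have h1 : (range ((L+1)/2)).card ≤ (I1 u' w').card + (bad1.card + bad2.card) := by
      calc (range ((L+1)/2)).card ≤ (I1 u' w' ∪ (bad1 ∪ bad2)).card := card_le_card hsub
        _ ≤ (I1 u' w').card + (bad1 ∪ bad2).card := card_union_le _ _
        _ ≤ _ := by have := card_union_le bad1 bad2; omega
    have hbad1 : bad1.card ≤ (pathU.filter (fun v => ¬ G.Adj w' v)).card := by
      apply card_le_card_of_injOn (fun k => p (2*k))
      · intro k hk
        simp only [hb1, coe_filter, Set.mem_setOf_eq, mem_coe, mem_filter, mem_range] at hk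
        exact mem_filter.mpr ⟨hmemU (2*k) (by omega) (by omega), hk.2⟩
      · intro a ha b hb hab
        simp only [hb1, coe_filter, Set.mem_setOf_eq, mem_range] at ha hb
        have := hinj (2*a) (by omega) (2*b) (by omega) hab
        omega
    have hbad2 : bad2.card ≤ (pathW.filter (fun v => ¬ G.Adj u' v)).card := by
      apply card_le_card_of_injOn (fun k => p (2*k+1))
      · intro k hk
        simp only [hb2, coe_filter, Set.mem_setOf_eq, mem_coe, mem_filter, mem_range] at hk
        exact mem_filter.mpr ⟨hmemW (2*k+1) (by omega) (by omega), hk.2⟩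
      · intro a ha b hb hab
        simp only [hb2, coe_filter, Set.mem_setOf_eq, mem_range] at ha hb
        have := hinj (2*a+1) (by omega) (2*b+1) (by omega) hab
        omega
    rw [card_range] at h1
    omega
  -- budgets
  have hpWFin : pathW ⊆ pathFin := by
    intro v hv
    obtain ⟨i, hi, rfl⟩ := mem_image.mp hv
    exact mem_image_of_mem p (mem_of_mem_filter _ hi)
  have hpUFin : pathU ⊆ pathFin := by
    intro v hv
    obtain ⟨i, hi, rfl⟩ := mem_image.mp hv
    exact mem_image_of_mem p (mem_of_mem_filter _ hi)
  have hdisjPW : Disjoint pathW offW := by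
    rw [disjoint_left]
    intro v hv hv2
    exact (mem_sdiff.mp hv2).2 (hpWFin hv)
  have hdisjPU : Disjoint pathU offU := by
    rw [disjoint_left]
    intro v hv hv2
    exact (mem_sdiff.mp hv2).2 (hpUFin hv)
  have budgetW : ∀ u' ∈ U, (pathW.filter (fun v => ¬ G.Adj u' v)).card
      + (offW.filter (fun v => ¬ G.Adj u' v)).card ≤ q := by
    intro u' hu'
    have hcu := card_union_of_disjoint
      (disjoint_filter_filter (p := fun v => ¬ G.Adj u' v) (q := fun v => ¬ G.Adj u' v) hdisjPW)
    have hsub : (pathW.filter (fun v => ¬ G.Adj u' v)) ∪ (offW.filter (fun v => ¬ G.Adj u' v))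
        ⊆ W.filter (fun v => ¬ G.Adj u' v) :=
      union_subset (filter_subset_filter _ hpWsub) (filter_subset_filter _ sdiff_subset)
    have h2 := card_le_card hsub
    have h3 := S.nonadjU u' hu'
    omega
  have budgetU : ∀ w' ∈ W, (pathU.filter (fun v => ¬ G.Adj w' v)).card
      + (offU.filter (fun v => ¬ G.Adj w' v)).card ≤ q := by
    intro w' hw'
    have hcu := card_union_of_disjoint
      (disjoint_filter_filter (p := fun v => ¬ G.Adj w' v) (q := fun v => ¬ G.Adj w' v) hdisjPU)
    have hsub : (pathU.filter (fun v => ¬ G.Adj w' v)) ∪ (offU.filter (fun v => ¬ G.Adj w' v))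
        ⊆ U.filter (fun v => ¬ G.Adj w' v) :=
      union_subset (filter_subset_filter _ hpUsub) (filter_subset_filter _ sdiff_subset)
    have h2 := card_le_card hsub
    have h3 := S.nonadjW w' hw'
    omega
  have hz1q : ∀ w' ∈ W, (pathU.filter (fun v => ¬ G.Adj w' v)).card ≤ q := by
    intro w' hw'
    have := budgetU w' hw'
    omega
  have hz2q : ∀ u' ∈ U, (pathW.filter (fun v => ¬ G.Adj u' v)).card ≤ q := by
    intro u' hu'
    have := budgetW u' hu'
    omega
  have hm3 : 3 ≤ m := by omega
  have hoffUne : offU.Nonempty := card_pos.mp (by omega)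
  have hoffWne : offW.Nonempty := card_pos.mp (by omega)
  -- Step 2 : an adjacent off-path pair exists
  have hpair : ∃ u' ∈ offU, ∃ w' ∈ offW, G.Adj u' w' := by
    by_contra hnp
    push_neg at hnp
    obtain ⟨u₀, hu₀⟩ := hoffUne
    obtain ⟨w₀, hw₀⟩ := hoffWne
    have hfW : offW.filter (fun v => ¬ G.Adj u₀ v) = offW :=
      filter_true_of_mem (fun w hw => hnp u₀ hu₀ w hw)
    have hfU : offU.filter (fun v => ¬ G.Adj w₀ v) = offU :=
      filter_true_of_mem (fun u hu hc => hnp u hu w₀ hw₀ hc.symm)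
    have b1 := budgetW u₀ (hoffUmem u₀ hu₀).1
    have b2 := budgetU w₀ (hoffWmem w₀ hw₀).1
    rw [hfW] at b1
    rw [hfU] at b2
    have hb := HB u₀ hu₀ w₀ hw₀
    have hc := HC u₀ (hoffUmem u₀ hu₀).1 w₀ (hoffWmem w₀ hw₀).1
    have hq' := S.hq
    omega
  obtain ⟨u₀, hu₀, w₀, hw₀, hadj₀⟩ := hpair
  have hstar : (L+1)/2 ≤ 2*q := by
    have hIe := (HA u₀ hu₀ w₀ hw₀ hadj₀).1
    have hc := HC u₀ (hoffUmem u₀ hu₀).1 w₀ (hoffWmem w₀ hw₀).1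
    rw [hIe, card_empty] at hc
    have h1 := hz1q w₀ (hoffWmem w₀ hw₀).1
    have h2 := hz2q u₀ (hoffUmem u₀ hu₀).1
    omega
  have hbq : (L+1)/2 + q < m := by
    have := S.hq
    omega
  by_cases hacase : m ≤ L/2 + 1 + q
  · -- corner case : q = 1, m = 4, L = 4
    have hcor : q = 1 ∧ m = 4 ∧ L = 4 := by
      have := S.hq
      omega
    obtain ⟨hq1, hm4, hL4⟩ := hcor
    obtain ⟨u', hu'⟩ := hoffUne
    have hu'U := (hoffUmem u' hu').1
    have hp1W : p 1 ∈ pathW := hmemW 1 (by omega) (by omega)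
    have hp3W : p 3 ∈ pathW := hmemW 3 (by omega) (by omega)
    have hp13 : p 1 ≠ p 3 := fun h => by
      have := hinj 1 (by omega) 3 (by omega) h; omega
    have hbud := budgetW u' hu'U
    have hsplit3 := card_filter_add_card_filter_not
      (s := offW)
      (p := fun v => G.Adj u' v)
    by_cases c1 : G.Adj u' (p 1)
    · by_cases c3 : G.Adj u' (p 3)
      · -- u' adjacent to both path W vertices
        have hz2 : (pathW.filter (fun v => ¬ G.Adj u' v)) = ∅ := by
          rw [eq_empty_iff_forall_notMem]
          intro v hv
          rw [mem_filter] at hv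
          obtain ⟨i, hi, rfl⟩ := mem_image.mp hv.1
          have hi' := mem_filter.mp hi
          have hiL := mem_range.mp hi'.1
          have : i = 1 ∨ i = 3 := by omega
          rcases this with rfl | rfl
          · exact hv.2 c1
          · exact hv.2 c3
        rw [hz2, card_empty] at hbud
        have hne : (offW.filter (fun v => G.Adj u' v)).Nonempty := card_pos.mp (by omega)
        obtain ⟨w, hw⟩ := hne
        rw [mem_filter] at hw
        have hIe := (HA u' hu' w hw.1 hw.2).1
        have hc := HC u' hu'U w (hoffWmem w hw.1).1
        rw [hIe, card_empty] at hc
        have h1 := hz1q w (hoffWmem w hw.1).1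
        rw [hz2, card_empty] at hc
        omega
      · -- u' not adjacent to p 3
        have hz2pos : 1 ≤ (pathW.filter fun v => ¬ G.Adj u' v).card :=
          card_pos.mpr ⟨p 3, mem_filter.mpr ⟨hp3W, c3⟩⟩
        have hoffsub : ∀ w ∈ offW, G.Adj u' w := by
          intro w hw
          by_contra hcw
          have : 1 ≤ (offW.filter fun v => ¬ G.Adj u' v).card :=
            card_pos.mpr ⟨w, mem_filter.mpr ⟨hw, hcw⟩⟩
          omega
        have hkey : ∀ w ∈ offW, ¬ G.Adj (p 0) w := by
          intro w hw hcw
          have hIe := (HA u' hu' w hw (hoffsub w hw)).1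
          have h0' : (0:ℕ) ∈ I1 u' w := by
            simp only [hI1def, mem_filter, mem_range]
            refine ⟨by omega, ?_, ?_⟩
            · show G.Adj w (p (2*0))
              have : 2*0 = 0 := by omega
              rw [this]; exact hcw.symm
            · show G.Adj u' (p (2*0+1))
              have : 2*0+1 = 1 := by omega
              rw [this]; exact c1
          rw [hIe] at h0'
          exact absurd h0' (notMem_empty 0)
        have hsubW : offW ⊆ W.filter (fun v => ¬ G.Adj (p 0) v) := fun w hw =>
          mem_filter.mpr ⟨(mem_sdiff.mp hw).1, hkey w hw⟩
        have h1 := card_le_card hsubW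
        have h2 := S.nonadjU (p 0) h0
        omega
    · -- u' not adjacent to p 1
      have hz2pos : 1 ≤ (pathW.filter fun v => ¬ G.Adj u' v).card :=
        card_pos.mpr ⟨p 1, mem_filter.mpr ⟨hp1W, c1⟩⟩
      have hoffsub : ∀ w ∈ offW, G.Adj u' w := by
        intro w hw
        by_contra hcw
        have : 1 ≤ (offW.filter fun v => ¬ G.Adj u' v).card :=
          card_pos.mpr ⟨w, mem_filter.mpr ⟨hw, hcw⟩⟩
        omega
      have c3 : G.Adj u' (p 3) := by
        by_contra c3
        have hsub2 : {p 1, p 3} ⊆ pathW.filter (fun v => ¬ G.Adj u' v) := by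
          intro v hv
          rcases mem_insert.mp hv with rfl | hv
          · exact mem_filter.mpr ⟨hp1W, c1⟩
          · rw [mem_singleton] at hv
            subst hv
            exact mem_filter.mpr ⟨hp3W, c3⟩
        have h1 := card_le_card hsub2
        rw [card_insert_of_notMem (by simp [hp13]), card_singleton] at h1
        omega
      have hkey : ∀ w ∈ offW, ¬ G.Adj (p 4) w := by
        intro w hw hcw
        have hI2 := (HA u' hu' w hw (hoffsub w hw)).2
        refine hI2 1 (by omega) ⟨?_, ?_⟩
        · show G.Adj u' (p (2*1+1))
          have : 2*1+1 = 3 := by omega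
          rw [this]; exact c3
        · show G.Adj w (p (2*1+2))
          have : 2*1+2 = 4 := by omega
          rw [this]; exact hcw.symm
      have hp4U : p 4 ∈ U := (halt 4 (by omega)).1 (by omega)
      have hsubW : offW ⊆ W.filter (fun v => ¬ G.Adj (p 4) v) := fun w hw =>
        mem_filter.mpr ⟨(mem_sdiff.mp hw).1, hkey w hw⟩
      have h1 := card_le_card hsubW
      have h2 := S.nonadjU (p 4) hp4U
      omega
  · -- main case
    have hp1W : p 1 ∈ W := (halt 1 (by omega)).2 (by omega)
    have hYsplit := card_filter_add_card_filter_not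
      (s := offU)
      (p := fun v => G.Adj (p 1) v)
    have hYbound : (offU.filter (fun v => ¬ G.Adj (p 1) v)).card ≤ q := by
      have hoffUsub : offU ⊆ U := sdiff_subset
      have h1 := card_le_card (filter_subset_filter (fun v => ¬ G.Adj (p 1) v) hoffUsub)
      have h2 := S.nonadjW (p 1) hp1W
      omega
    have hYpos : (offU.filter (fun v => G.Adj (p 1) v)).Nonempty := card_pos.mp (by omega)
    obtain ⟨u₁, hu₁⟩ := hYpos
    rw [mem_filter] at hu₁
    have hu₁U := (hoffUmem u₁ hu₁.1).1
    have hbud := budgetW u₁ hu₁U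
    have hWsplit2 := card_filter_add_card_filter_not
      (s := offW)
      (p := fun v => G.Adj u₁ v)
    have hWadjpos : (offW.filter (fun v => G.Adj u₁ v)).Nonempty := card_pos.mp (by omega)
    have hkey : offW.filter (fun v => G.Adj u₁ v) ⊆ W.filter (fun v => ¬ G.Adj (p 0) v) := by
      intro w hw
      rw [mem_filter] at hw
      refine mem_filter.mpr ⟨(mem_sdiff.mp hw.1).1, ?_⟩
      intro hcw
      have hIe := (HA u₁ hu₁.1 w hw.1 hw.2).1
      have h0' : (0:ℕ) ∈ I1 u₁ w := by
        simp only [hI1def, mem_filter, mem_range]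
        refine ⟨by omega, ?_, ?_⟩
        · show G.Adj w (p (2*0))
          have : 2*0 = 0 := by omega
          rw [this]; exact hcw.symm
        · show G.Adj u₁ (p (2*0+1))
          have : 2*0+1 = 1 := by omega
          rw [this]; exact hu₁.2.symm
      rw [hIe] at h0'
      exact absurd h0' (notMem_empty 0)
    have h4 := card_le_card hkey
    have h5 := S.nonadjU (p 0) h0
    obtain ⟨w, hw⟩ := hWadjpos
    rw [mem_filter] at hw
    have hIe := (HA u₁ hu₁.1 w hw.1 hw.2).1
    have hc := HC u₁ hu₁U w (hoffWmem w hw.1).1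
    rw [hIe, card_empty] at hc
    have h6 := hz1q w (hoffWmem w hw.1).1
    have hq' := S.hq
    omega

lemma base_even (S : Setup G U W m q) (x y : V) (hx : x ∈ U) (hy : y ∈ U) (hxy : x ≠ y)
    (hm : 2 ≤ m) :
    ∃ p : ℕ → V, (∀ i, i < 2 → G.Adj (p i) (p (i+1))) ∧
      (∀ i, i ≤ 2 → ∀ j, j ≤ 2 → p i = p j → i = j) ∧ p 0 = x ∧ p 2 = y := by
  have hcompl : W.filter (fun v => ¬(G.Adj x v ∧ G.Adj y v)) ⊆
      (W.filter (fun v => ¬ G.Adj x v)) ∪ (W.filter (fun v => ¬ G.Adj y v)) := by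
    intro v hv
    simp only [mem_filter, mem_union] at hv ⊢
    tauto
  have h1 := card_le_card hcompl
  have h2 := card_union_le (W.filter (fun v => ¬ G.Adj x v)) (W.filter (fun v => ¬ G.Adj y v))
  have h3 := S.nonadjU x hx
  have h4 := S.nonadjU y hy
  have h5 := card_filter_add_card_filter_not
    (s := W) (p := fun v => G.Adj x v ∧ G.Adj y v)
  have h6 := S.hq
  have hne : (W.filter (fun v => G.Adj x v ∧ G.Adj y v)).Nonempty := by
    apply card_pos.mp
    rw [S.cardW] at h5
    omega
  obtain ⟨w, hw⟩ := hne
  rw [mem_filter] at hw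
  have hxw : x ≠ w := S.neUW hx hw.1
  have hyw : y ≠ w := S.neUW hy hw.1
  refine ⟨fun i => if i = 0 then x else if i = 1 then w else y, ?_, ?_, by norm_num, by norm_num⟩
  · intro i hi
    interval_cases i
    · simpa using hw.2.1
    · simpa using hw.2.2.symm
  · intro i hi j hj h
    interval_cases i <;> interval_cases j <;> simp_all

lemma base_odd (S : Setup G U W m q) (x y : V) (hx : x ∈ U) (hy : y ∈ W) (hm : 2 ≤ m) :
    ∃ p : ℕ → V, (∀ i, i < 3 → G.Adj (p i) (p (i+1))) ∧
      (∀ i, i ≤ 3 → ∀ j, j ≤ 3 → p i = p j → i = j) ∧ p 0 = x ∧ p 3 = y := by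
  have h6 := S.hq
  -- choose u ∈ U, adjacent to y, distinct from x
  have hcompl : U.filter (fun v => ¬(G.Adj y v ∧ v ≠ x)) ⊆
      (U.filter (fun v => ¬ G.Adj y v)) ∪ {x} := by
    intro v hv
    simp only [mem_filter, mem_union, mem_singleton] at hv ⊢
    tauto
  have h1 := card_le_card hcompl
  have h2 := card_union_le (U.filter (fun v => ¬ G.Adj y v)) ({x} : Finset V)
  have h3 := S.nonadjW y hy
  have h5 := card_filter_add_card_filter_not
    (s := U) (p := fun v => G.Adj y v ∧ v ≠ x)
  have hne : (U.filter (fun v => G.Adj y v ∧ v ≠ x)).Nonempty := by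
    apply card_pos.mp
    rw [S.cardU] at h5
    simp only [card_singleton] at h2
    omega
  obtain ⟨u, hu⟩ := hne
  rw [mem_filter] at hu
  obtain ⟨huU, huy, hux⟩ := hu
  -- choose w ∈ W adjacent to x and u, distinct from y
  have hcompl2 : W.filter (fun v => ¬(G.Adj x v ∧ G.Adj u v ∧ v ≠ y)) ⊆
      (W.filter (fun v => ¬ G.Adj x v)) ∪ ((W.filter (fun v => ¬ G.Adj u v)) ∪ {y}) := by
    intro v hv
    simp only [mem_filter, mem_union, mem_singleton] at hv ⊢
    tauto
  have g1 := card_le_card hcompl2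
  have g2 := card_union_le (W.filter (fun v => ¬ G.Adj x v))
    ((W.filter (fun v => ¬ G.Adj u v)) ∪ {y})
  have g2' := card_union_le (W.filter (fun v => ¬ G.Adj u v)) ({y} : Finset V)
  have g3 := S.nonadjU x hx
  have g4 := S.nonadjU u huU
  have g5 := card_filter_add_card_filter_not
    (s := W) (p := fun v => G.Adj x v ∧ G.Adj u v ∧ v ≠ y)
  have hne2 : (W.filter (fun v => G.Adj x v ∧ G.Adj u v ∧ v ≠ y)).Nonempty := by
    apply card_pos.mp
    rw [S.cardW] at g5
    simp only [card_singleton] at g2'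
    omega
  obtain ⟨w, hw⟩ := hne2
  rw [mem_filter] at hw
  obtain ⟨hwW, hwx, hwu, hwy⟩ := hw
  have hxw : x ≠ w := S.neUW hx hwW
  have huw : u ≠ w := S.neUW huU hwW
  have hxy : x ≠ y := S.neUW hx hy
  have huy' : u ≠ y := S.neUW huU hy
  refine ⟨fun i => if i = 0 then x else if i = 1 then w else if i = 2 then u else y,
    ?_, ?_, by norm_num, by norm_num⟩
  · intro i hi
    interval_cases i
    · simpa using hwx
    · simpa using hwu.symm
    · simpa using huy.symm
  · intro i hi j hj h
    interval_cases i <;> interval_cases j <;> simp_all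

lemma grow_odd (S : Setup G U W m q) (x y : V) (hx : x ∈ U) (hy : y ∈ W) :
    ∀ n : ℕ, 3 + 2*n ≤ 2*m - 1 →
    ∃ p : ℕ → V, (∀ i, i < 3+2*n → G.Adj (p i) (p (i+1))) ∧
      (∀ i, i ≤ 3+2*n → ∀ j, j ≤ 3+2*n → p i = p j → i = j) ∧
      p 0 = x ∧ p (3+2*n) = y := by
  intro n
  induction n with
  | zero =>
    intro h
    exact base_odd S x y hx hy (by omega)
  | succ n ih =>
    intro h
    obtain ⟨p, h1, h2, h3, h4⟩ := ih (by omega)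
    obtain ⟨p', g1, g2, g3, g4⟩ := extend S p (3+2*n) (by omega) h1 h2
      (by rw [h3]; exact hx) (by omega) (by omega)
    have he : 3+2*(n+1) = (3+2*n)+2 := by omega
    refine ⟨p', ?_, ?_, by rw [g3, h3], by rw [he, g4, h4]⟩
    · intro i hi
      exact g1 i (by omega)
    · intro i hi j hj
      exact g2 i (by omega) j (by omega)

lemma grow_even (S : Setup G U W m q) (x y : V) (hx : x ∈ U) (hy : y ∈ U) (hxy : x ≠ y) :
    ∀ n : ℕ, 2 + 2*n ≤ 2*m - 2 →
    ∃ p : ℕ → V, (∀ i, i < 2+2*n → G.Adj (p i) (p (i+1))) ∧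
      (∀ i, i ≤ 2+2*n → ∀ j, j ≤ 2+2*n → p i = p j → i = j) ∧
      p 0 = x ∧ p (2+2*n) = y := by
  intro n
  induction n with
  | zero =>
    intro h
    exact base_even S x y hx hy hxy (by omega)
  | succ n ih =>
    intro h
    obtain ⟨p, h1, h2, h3, h4⟩ := ih (by omega)
    obtain ⟨p', g1, g2, g3, g4⟩ := extend S p (2+2*n) (by omega) h1 h2
      (by rw [h3]; exact hx) (by omega) (by omega)
    have he : 2+2*(n+1) = (2+2*n)+2 := by omega
    refine ⟨p', ?_, ?_, by rw [g3, h3], by rw [he, g4, h4]⟩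
    · intro i hi
      exact g1 i (by omega)
    · intro i hi j hj
      exact g2 i (by omega) j (by omega)

lemma odd_walks (S : Setup G U W m q) (x y : V) (hx : x ∈ U) (hy : y ∈ W)
    (ℓ : ℕ) (hodd : Odd ℓ) (h3 : 3 ≤ ℓ) (hle : ℓ ≤ 2*m - 1) :
    ∃ p : G.Walk x y, p.IsPath ∧ p.length = ℓ := by
  obtain ⟨k, hk⟩ := hodd
  have hn : ℓ = 3 + 2*(k-1) := by omega
  obtain ⟨p, h1, h2, h3', h4⟩ := grow_odd S x y hx hy (k-1) (by omega)
  obtain ⟨wk, hwk1, hwk2⟩ := exists_walk p (3+2*(k-1)) h1 h2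
  refine ⟨wk.copy h3' h4, ?_, ?_⟩
  · rwa [SimpleGraph.Walk.isPath_copy]
  · rw [SimpleGraph.Walk.length_copy, hwk2]
    omega

lemma even_walks (S : Setup G U W m q) (x y : V) (hx : x ∈ U) (hy : y ∈ U) (hxy : x ≠ y)
    (ℓ : ℕ) (heven : Even ℓ) (h2 : 2 ≤ ℓ) (hle : ℓ ≤ 2*m - 2) :
    ∃ p : G.Walk x y, p.IsPath ∧ p.length = ℓ := by
  obtain ⟨k, hk⟩ := heven
  have hn : ℓ = 2 + 2*(k-1) := by omega
  obtain ⟨p, h1, h2', h3', h4⟩ := grow_even S x y hx hy hxy (k-1) (by omega)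
  obtain ⟨wk, hwk1, hwk2⟩ := exists_walk p (2+2*(k-1)) h1 h2'
  refine ⟨wk.copy h3' h4, ?_, ?_⟩
  · rwa [SimpleGraph.Walk.isPath_copy]
  · rw [SimpleGraph.Walk.length_copy, hwk2]
    omega


end BBP

/-- A balanced bipartite graph with parts of order `m` and minimum degree at
least `3m/4` is bipanconnected. -/
theorem balanced_bipartite_bipanconnected {V : Type*} [Fintype V] [DecidableEq V]
    (G : SimpleGraph V) [DecidableRel G.Adj] (U W : Finset V) (m : ℕ)
    (hdisj : Disjoint U W) (hcover : U ∪ W = Finset.univ)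
    (hU : U.card = m) (hW : W.card = m)
    (hbip : ∀ a b : V, G.Adj a b → (a ∈ U ∧ b ∈ W) ∨ (a ∈ W ∧ b ∈ U))
    (hdeg : ∀ v : V, 3 * m ≤ 4 * G.degree v) :
    (∀ x ∈ U, ∀ y ∈ W, ∀ ℓ : ℕ, Odd ℓ → 3 ≤ ℓ → ℓ ≤ 2 * m - 1 →
        ∃ p : G.Walk x y, p.IsPath ∧ p.length = ℓ) ∧
    (∀ x ∈ U, ∀ y ∈ U, x ≠ y → ∀ ℓ : ℕ, Even ℓ → 2 ≤ ℓ → ℓ ≤ 2 * m - 2 →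
        ∃ p : G.Walk x y, p.IsPath ∧ p.length = ℓ) ∧
    (∀ x ∈ W, ∀ y ∈ W, x ≠ y → ∀ ℓ : ℕ, Even ℓ → 2 ≤ ℓ → ℓ ≤ 2 * m - 2 →
        ∃ p : G.Walk x y, p.IsPath ∧ p.length = ℓ) := by
  classical
  have hnbU : ∀ v ∈ U, (W.filter (fun w => G.Adj v w)) = G.neighborFinset v := by
    intro v hv
    ext w
    simp only [Finset.mem_filter, SimpleGraph.mem_neighborFinset]
    constructor
    · exact fun h => h.2
    · intro h
      refine ⟨?_, h⟩
      rcases hbip v w h with ⟨_, hw⟩ | ⟨hv', _⟩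
      · exact hw
      · exact absurd hv' (fun hc => (Finset.disjoint_left.mp hdisj) hv hc)
  have hnbW : ∀ v ∈ W, (U.filter (fun u => G.Adj v u)) = G.neighborFinset v := by
    intro v hv
    ext w
    simp only [Finset.mem_filter, SimpleGraph.mem_neighborFinset]
    constructor
    · exact fun h => h.2
    · intro h
      refine ⟨?_, h⟩
      rcases hbip v w h with ⟨hv', _⟩ | ⟨_, hw⟩
      · exact absurd hv' (fun hc => (Finset.disjoint_left.mp hdisj.symm) hv hc)
      · exact hw
  have S : BBP.Setup G U W m (m/4) := by
    refine ⟨hdisj, ?_, hU, hW, hbip, ?_, ?_, by omega⟩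
    · intro v
      have : v ∈ U ∪ W := by rw [hcover]; exact Finset.mem_univ v
      exact Finset.mem_union.mp this
    · intro v hv
      have h1 := Finset.card_filter_add_card_filter_not
        (s := W) (p := fun w => G.Adj v w)
      rw [hnbU v hv, ← SimpleGraph.degree, hW] at h1
      have h2 := hdeg v
      omega
    · intro v hv
      have h1 := Finset.card_filter_add_card_filter_not
        (s := U) (p := fun u => G.Adj v u)
      rw [hnbW v hv, ← SimpleGraph.degree, hU] at h1
      have h2 := hdeg v
      omega
  refine ⟨?_, ?_, ?_⟩
  · intro x hx y hy ℓ hodd h3 hle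
    exact BBP.odd_walks S x y hx hy ℓ hodd h3 hle
  · intro x hx y hy hxy ℓ heven h2 hle
    exact BBP.even_walks S x y hx hy hxy ℓ heven h2 hle
  · intro x hx y hy hxy ℓ heven h2 hle
    exact BBP.even_walks S.symm x y hx hy hxy ℓ heven h2 hle
end

section
/- Let k be a positive integer and G a graph of order n with σ₂(G) ≥ n + k − 1 and δ(G) ≤ n_k/8 where n_k ≤ n. Let a be a vertex of degree δ(G) and B = V(G) \ ({a} ∪ N(a)). Then every induced subgraph of G[B] on at least 3n_k/8 vertices is panconnected. -/
set_option linter.unusedSectionVars false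
set_option maxHeartbeats 1000000

open List

section helpers
variable {V : Type*} [Fintype V] [DecidableEq V]

lemma walk_of_list (G : SimpleGraph V) :
    ∀ (l : List V) (u v : V), l.Chain' G.Adj → l.head? = some u → l.getLast? = some v →
      ∃ p : G.Walk u v, p.support = l
  | [], u, v => by intro _ h _; simp at h
  | [x], u, v => by
      intro _ hh hl
      simp at hh hl
      subst hh; subst hl
      exact ⟨SimpleGraph.Walk.nil, rfl⟩
  | x :: y :: t, u, v => by
      intro hc hh hl
      simp at hh
      subst hh
      rw [List.getLast?_cons_cons] at hl
      obtain ⟨hadj, hc'⟩ := List.isChain_cons_cons.mp hc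
      obtain ⟨q, hq⟩ := walk_of_list G (y :: t) y v hc' rfl hl
      exact ⟨SimpleGraph.Walk.cons hadj q, by simp [hq]⟩

lemma not_chain'_split {R : V → V → Prop} :
    ∀ l : List V, ¬ l.Chain' R → ∃ l1 a b l2, l = l1 ++ a :: b :: l2 ∧ ¬ R a b
  | [] => by intro h; exact absurd List.isChain_nil h
  | [a] => by intro h; exact absurd (List.isChain_singleton a) h
  | a :: b :: t => by
      intro h
      rw [List.Chain', List.isChain_cons_cons] at h
      by_cases hR : R a b
      · have ht : ¬ (b :: t).Chain' R := fun hc => h ⟨hR, hc⟩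
        obtain ⟨l1, a', b', l2, heq, h'⟩ := not_chain'_split (b :: t) ht
        exact ⟨a :: l1, a', b', l2, by simp [heq], h'⟩
      · exact ⟨[], a, b, t, rfl, hR⟩

lemma head?_congr (l1 : List V) (x : V) (t t' : List V) :
    (l1 ++ x :: t).head? = (l1 ++ x :: t').head? := by cases l1 <;> simp

lemma chain'_insert {R : V → V → Prop} {a y b : V} {l2 : List V}
    (h1 : R a y) (h2 : R y b) :
    ∀ l1 : List V, List.Chain' R (l1 ++ a :: b :: l2) → List.Chain' R (l1 ++ a :: y :: b :: l2)
  | [] => by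
      intro h
      simp only [List.nil_append] at h ⊢
      rw [List.Chain', List.isChain_cons_cons] at h ⊢
      exact ⟨h1, List.isChain_cons_cons.mpr ⟨h2, h.2⟩⟩
  | x :: l1 => by
      intro h
      rw [List.cons_append] at h ⊢
      rw [List.Chain', List.isChain_cons] at h ⊢
      refine ⟨?_, chain'_insert h1 h2 l1 h.2⟩
      intro w hw
      apply h.1
      rwa [head?_congr l1 a (b :: l2) (y :: b :: l2)]

lemma chain_count (P : V → Bool) :
    ∀ l : List V, l.Chain' (fun a b => P a = true ∨ P b = true) →
      l.length ≤ 2 * l.countP P + 1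
  | [] => by simp
  | [a] => by simp
  | a :: b :: t => by
      intro h
      obtain ⟨h1, h2⟩ := List.isChain_cons_cons.mp h
      have ht := h2.tail
      simp only [List.tail_cons] at ht
      have ih := chain_count P t ht
      simp only [List.countP_cons, List.length_cons]
      rcases h1 with h1 | h1 <;> simp [h1] <;> omega

lemma pick_lemma {S F : Finset V} (h : F.card < S.card) : ∃ w ∈ S, w ∉ F := by
  have h2 : 0 < (S \ F).card := by
    have := Finset.le_card_sdiff F S
    omega
  obtain ⟨w, hw⟩ := Finset.card_pos.mp h2
  rw [Finset.mem_sdiff] at hw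
  exact ⟨w, hw.1, hw.2⟩

lemma adj_of_not_nn (G : SimpleGraph V) [DecidableRel G.Adj] {S : Finset V} {x w : V}
    (hw : w ∈ S) (hx : w ∉ S \ insert x (G.neighborFinset x)) (hne : w ≠ x) : G.Adj x w := by
  rw [Finset.mem_sdiff, not_and, not_not] at hx
  have := hx hw
  rw [Finset.mem_insert, SimpleGraph.mem_neighborFinset] at this
  tauto

lemma mem_insert_mid {x y : V} (l1 : List V) (a b : V) (l2 : List V) :
    x ∈ l1 ++ a :: y :: b :: l2 ↔ x = y ∨ x ∈ l1 ++ a :: b :: l2 := by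
  simp only [List.mem_append, List.mem_cons]
  tauto

lemma nodup_insert_mid {y : V} : ∀ (l1 : List V) (a b : V) (l2 : List V),
    (l1 ++ a :: b :: l2).Nodup → y ∉ l1 ++ a :: b :: l2 → (l1 ++ a :: y :: b :: l2).Nodup
  | [] => by
      intro a b l2 h hy
      simp only [List.nil_append, List.nodup_cons, List.mem_cons, not_or] at h hy ⊢
      have h' : ¬ a = y := fun hh => hy.1 hh.symm
      tauto
  | x :: l1 => by
      intro a b l2 h hy
      simp only [List.cons_append, List.nodup_cons] at h ⊢
      simp only [List.cons_append, List.mem_cons, not_or] at hy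
      refine ⟨?_, nodup_insert_mid l1 a b l2 h.2 hy.2⟩
      intro hxmem
      rcases (mem_insert_mid l1 a b l2).mp hxmem with h1 | h1
      · exact hy.1 h1.symm
      · exact h.1 h1

lemma core_lemma (G : SimpleGraph V) [DecidableRel G.Adj] (S : Finset V) (d : ℕ)
    (hd : ∀ x ∈ S, (S \ insert x (G.neighborFinset x)).card ≤ d)
    (hm : 3 * d + 3 ≤ S.card)
    (u v : V) (hu : u ∈ S) (hv : v ∈ S) (huv : u ≠ v) :
    ∀ ℓ : ℕ, 2 ≤ ℓ → ℓ + 1 ≤ S.card →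
      ∃ l : List V, l.Chain' G.Adj ∧ l.Nodup ∧ l.head? = some u ∧
        l.getLast? = some v ∧ l.length = ℓ + 1 ∧ ∀ x ∈ l, x ∈ S := by
  intro ℓ hℓ
  induction ℓ, hℓ using Nat.le_induction with
  | base =>
    intro _
    have hcard : (insert u (insert v ((S \ insert u (G.neighborFinset u)) ∪
        (S \ insert v (G.neighborFinset v))))).card < S.card := by
      have h1 := Finset.card_insert_le u (insert v ((S \ insert u (G.neighborFinset u)) ∪
        (S \ insert v (G.neighborFinset v))))
      have h2 := Finset.card_insert_le v ((S \ insert u (G.neighborFinset u)) ∪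
        (S \ insert v (G.neighborFinset v)))
      have h3 := Finset.card_union_le (S \ insert u (G.neighborFinset u))
        (S \ insert v (G.neighborFinset v))
      have h4 := hd u hu
      have h5 := hd v hv
      omega
    obtain ⟨w, hwS, hwF⟩ := pick_lemma hcard
    simp only [Finset.mem_insert, Finset.mem_union, not_or] at hwF
    obtain ⟨hwu, hwv, hwnu, hwnv⟩ := hwF
    have hadjuw : G.Adj u w := adj_of_not_nn G hwS hwnu hwu
    have hadjvw : G.Adj v w := adj_of_not_nn G hwS hwnv hwv
    refine ⟨[u, w, v], ?_, ?_, by simp, by simp, by simp, ?_⟩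
    · exact List.isChain_cons_cons.mpr ⟨hadjuw, List.isChain_cons_cons.mpr ⟨hadjvw.symm, List.isChain_singleton v⟩⟩
    · have h1 : u ≠ w := fun h => hwu h.symm
      simp [List.nodup_cons, h1, hwv, huv]
    · intro x hx
      simp only [List.mem_cons, List.not_mem_nil, or_false] at hx
      rcases hx with rfl | rfl | rfl
      · exact hu
      · exact hwS
      · exact hv
  | succ n hn ih =>
    intro hcard2
    obtain ⟨l, hc, hnd, hh, hl, hlen, hmem⟩ := ih (by omega)
    have hlTcard : l.toFinset.card = n + 1 := by
      rw [List.toFinset_card_of_nodup hnd, hlen]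
    by_cases hA : ∃ y, y ∈ S ∧ y ∉ l ∧ ¬ l.Chain' (fun a b => ¬(G.Adj y a ∧ G.Adj y b))
    · -- Move A: insertion
      obtain ⟨y, hyS, hyl, hnc⟩ := hA
      obtain ⟨l1, a, b, l2, hdec, hR⟩ := not_chain'_split l hnc
      rw [not_not] at hR
      subst hdec
      refine ⟨l1 ++ a :: y :: b :: l2, ?_, ?_, ?_, ?_, ?_, ?_⟩
      · exact chain'_insert hR.1.symm hR.2 l1 hc
      · exact nodup_insert_mid l1 a b l2 hnd hyl
      · rw [head?_congr l1 a (y :: b :: l2) (b :: l2)]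
        exact hh
      · have e1 : l1 ++ a :: y :: b :: l2 = (l1 ++ [a, y]) ++ b :: l2 := by simp
        have e2 : l1 ++ a :: b :: l2 = (l1 ++ [a]) ++ b :: l2 := by simp
        rw [e1, List.getLast?_append_of_ne_nil _ (by simp)]
        rw [e2, List.getLast?_append_of_ne_nil _ (by simp)] at hl
        exact hl
      · simp only [List.length_append, List.length_cons] at hlen ⊢
        omega
      · intro x hx
        rcases (mem_insert_mid l1 a b l2).mp hx with rfl | h
        · exact hyS
        · exact hmem x h
    · -- Move B
      push_neg at hA
      have hcnt : ∀ y ∈ S, y ∉ l →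
          l.length ≤ 2 * ((S \ insert y (G.neighborFinset y)) ∩ l.toFinset).card + 1 := by
        intro y hyS hyl
        have hQ := hA y hyS hyl
        have hchain : l.Chain' (fun a b =>
            (decide (¬ G.Adj y a)) = true ∨ (decide (¬ G.Adj y b)) = true) := by
          refine hQ.imp ?_
          intro a b hab
          simp only [decide_eq_true_eq]
          tauto
        have h1 := chain_count _ l hchain
        have h2 : l.countP (fun x => decide (¬ G.Adj y x)) ≤
            ((S \ insert y (G.neighborFinset y)) ∩ l.toFinset).card := by
          rw [List.countP_eq_length_filter]
          have hfn : (l.filter (fun x => decide (¬ G.Adj y x))).Nodup := hnd.filter _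
          rw [← List.toFinset_card_of_nodup hfn]
          apply Finset.card_le_card
          intro x hx
          simp only [List.mem_toFinset, List.mem_filter, decide_eq_true_eq] at hx
          obtain ⟨hxl, hxa⟩ := hx
          simp only [Finset.mem_inter, Finset.mem_sdiff, Finset.mem_insert,
            List.mem_toFinset, SimpleGraph.mem_neighborFinset]
          refine ⟨⟨hmem x hxl, ?_⟩, hxl⟩
          push_neg
          exact ⟨fun hxy => hyl (hxy ▸ hxl), hxa⟩
        omega
      -- step 1: the path has at most 2d+1 vertices
      obtain ⟨y0, hy0S, hy0T⟩ := pick_lemma (show l.toFinset.card < S.card by omega)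
      have hy0l : y0 ∉ l := fun h => hy0T (List.mem_toFinset.mpr h)
      have hp1 := hcnt y0 hy0S hy0l
      have hinter0 : ((S \ insert y0 (G.neighborFinset y0)) ∩ l.toFinset).card ≤ d :=
        le_trans (Finset.card_le_card Finset.inter_subset_left) (hd y0 hy0S)
      have hplen : n + 1 ≤ 2 * d + 1 := by omega
      -- destructure l
      obtain ⟨x0, x1, x2, rest, rfl⟩ : ∃ x0 x1 x2 rest, l = x0 :: x1 :: x2 :: rest := by
        match l, hlen with
        | x0 :: x1 :: x2 :: rest, _ => exact ⟨x0, x1, x2, rest, rfl⟩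
        | [], hlen => simp at hlen
        | [x0], hlen => simp at hlen; omega
        | [x0, x1], hlen => simp at hlen; omega
      have hx0u : x0 = u := by simpa using hh
      have hx0S : x0 ∈ S := hmem x0 (by simp)
      have hx2S : x2 ∈ S := hmem x2 (by simp)
      -- step 2: pick y adjacent to x0, outside l
      have hstep2 : ((x0 :: x1 :: x2 :: rest).toFinset ∪ (S \ insert x0 (G.neighborFinset x0))).card < S.card := by
        have h1 := Finset.card_union_le (x0 :: x1 :: x2 :: rest).toFinset (S \ insert x0 (G.neighborFinset x0))
        have h2 := hd x0 hx0S
        omega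
      obtain ⟨y, hyS, hyF⟩ := pick_lemma hstep2
      rw [Finset.mem_union, not_or] at hyF
      have hyl : y ∉ (x0 :: x1 :: x2 :: rest) := fun h => hyF.1 (List.mem_toFinset.mpr h)
      have hyx0 : y ≠ x0 := fun h => hyl (h ▸ (by simp))
      have hadjx0y : G.Adj x0 y := adj_of_not_nn G hyS hyF.2 hyx0
      -- step 3: refined counts for y
      have hcy := hcnt y hyS hyl
      have hsplit : ((S \ insert y (G.neighborFinset y)) ∩ (x0 :: x1 :: x2 :: rest).toFinset).card +
          ((S \ insert y (G.neighborFinset y)) \ (x0 :: x1 :: x2 :: rest).toFinset).card ≤ d := by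
        have h1 := Finset.card_inter_add_card_sdiff (S \ insert y (G.neighborFinset y)) (x0 :: x1 :: x2 :: rest).toFinset
        have h2 := hd y hyS
        omega
      -- step 4: pick z
      have hstep4 : (((insert y (x0 :: x1 :: x2 :: rest).toFinset) ∪
          ((S \ insert y (G.neighborFinset y)) \ (x0 :: x1 :: x2 :: rest).toFinset)) ∪
          (S \ insert x2 (G.neighborFinset x2))).card < S.card := by
        have h1 := Finset.card_union_le ((insert y (x0 :: x1 :: x2 :: rest).toFinset) ∪
          ((S \ insert y (G.neighborFinset y)) \ (x0 :: x1 :: x2 :: rest).toFinset))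
          (S \ insert x2 (G.neighborFinset x2))
        have h2 := Finset.card_union_le (insert y (x0 :: x1 :: x2 :: rest).toFinset)
          ((S \ insert y (G.neighborFinset y)) \ (x0 :: x1 :: x2 :: rest).toFinset)
        have h3 := Finset.card_insert_le y (x0 :: x1 :: x2 :: rest).toFinset
        have h4 := hd x2 hx2S
        omega
      obtain ⟨z, hzS, hzF⟩ := pick_lemma hstep4
      simp only [Finset.mem_union, Finset.mem_insert, not_or] at hzF
      obtain ⟨⟨⟨hzy, hzT⟩, hz2⟩, hz3⟩ := hzF
      have hzT' : z ∉ (x0 :: x1 :: x2 :: rest).toFinset := hzT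
      have hzl : z ∉ (x0 :: x1 :: x2 :: rest) := fun h => hzT' (List.mem_toFinset.mpr h)
      have hzx2 : z ≠ x2 := fun h => hzl (h ▸ (by simp))
      have hadjx2z : G.Adj x2 z := adj_of_not_nn G hzS hz3 hzx2
      have hznn : z ∉ S \ insert y (G.neighborFinset y) := fun hmem' =>
        hz2 (Finset.mem_sdiff.mpr ⟨hmem', hzT'⟩)
      have hadjyz : G.Adj y z := adj_of_not_nn G hzS hznn hzy
      -- facts from old chain and nodup
      obtain ⟨hadj01, hc1⟩ := List.isChain_cons_cons.mp hc
      obtain ⟨hadj12, hc2⟩ := List.isChain_cons_cons.mp hc1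
      simp only [List.nodup_cons, List.mem_cons, not_or] at hnd
      simp only [List.mem_cons, not_or] at hyl hzl
      refine ⟨x0 :: y :: z :: x2 :: rest, ?_, ?_, ?_, ?_, ?_, ?_⟩
      · exact List.isChain_cons_cons.mpr ⟨hadjx0y, List.isChain_cons_cons.mpr ⟨hadjyz,
          List.isChain_cons_cons.mpr ⟨hadjx2z.symm, hc2⟩⟩⟩
      · have s1 : ¬ x0 = y := fun h => hyl.1 h.symm
        have s2 : ¬ x0 = z := fun h => hzl.1 h.symm
        have s3 : ¬ y = z := fun h => hzy h.symm
        simp only [List.nodup_cons, List.mem_cons, not_or]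
        tauto
      · simpa using hx0u
      · have e1 : (x0 :: x1 :: x2 :: rest).getLast? = (x2 :: rest).getLast? := by
          rw [List.getLast?_cons_cons, List.getLast?_cons_cons]
        have e2 : (x0 :: y :: z :: x2 :: rest).getLast? = (x2 :: rest).getLast? := by
          rw [List.getLast?_cons_cons, List.getLast?_cons_cons, List.getLast?_cons_cons]
        rw [e2, ← e1]
        exact hl
      · simp only [List.length_cons] at hlen ⊢
        omega
      · intro x hx
        simp only [List.mem_cons] at hx
        rcases hx with rfl | rfl | rfl | h
        · exact hx0S
        · exact hyS
        · exact hzS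
        · exact hmem x (List.mem_cons_of_mem _ (List.mem_cons_of_mem _ (List.mem_cons.mpr h)))

end helpers

/-- With `σ₂(G) ≥ n + k - 1` and `δ(G) ≤ n_k / 8`, every induced subgraph of
`G[B]` on at least `3 n_k / 8` vertices is panconnected, where
`B = V(G) \ ({a} ∪ N(a))` for a vertex `a` of minimum degree. -/
theorem subsets_of_B_panconnected {V : Type*} [Fintype V] [DecidableEq V] [Nonempty V]
    (G : SimpleGraph V) [DecidableRel G.Adj] (k nk : ℕ) (hk : 1 ≤ k)
    (hnk : nk ≤ Fintype.card V)
    (hσ : ∀ u v : V, u ≠ v → ¬G.Adj u v →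
      Fintype.card V + k - 1 ≤ G.degree u + G.degree v)
    (hδ : 8 * G.minDegree ≤ nk)
    (a : V) (ha : G.degree a = G.minDegree)
    (B : Finset V) (hB : B = Finset.univ \ insert a (G.neighborFinset a)) :
    ∀ S : Finset V, S ⊆ B → 3 * nk ≤ 8 * S.card →
      ∀ u ∈ S, ∀ v ∈ S, u ≠ v → ∀ ℓ : ℕ, 2 ≤ ℓ → ℓ ≤ S.card - 1 →
        ∃ p : G.Walk u v, p.IsPath ∧ p.length = ℓ ∧ ∀ x ∈ p.support, x ∈ S := by
  intro S hSB hScard u hu v hv huv ℓ hℓ2 hℓub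
  have hmemB : ∀ x ∈ S, x ≠ a ∧ ¬ G.Adj a x := by
    intro x hx
    have hx' := hSB hx
    rw [hB, Finset.mem_sdiff, Finset.mem_insert, SimpleGraph.mem_neighborFinset] at hx'
    exact ⟨fun h => hx'.2 (Or.inl h), fun h => hx'.2 (Or.inr h)⟩
  have hdeg : ∀ x ∈ S, Fintype.card V + k ≤ G.degree x + G.minDegree + 1 := by
    intro x hx
    obtain ⟨hxa, hxadj⟩ := hmemB x hx
    have h1 := hσ a x (fun h => hxa h.symm) hxadj
    omega
  have hδ1 : 1 ≤ G.minDegree := by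
    have h1 := hdeg u hu
    have h2 := G.degree_lt_card_verts u
    omega
  have hd : ∀ x ∈ S, (S \ insert x (G.neighborFinset x)).card ≤ G.minDegree - 1 := by
    intro x hx
    have h0 : (G.neighborFinset x).card = G.degree x := G.card_neighborFinset_eq_degree x
    have h1 := Finset.card_inter_add_card_sdiff (G.neighborFinset x) S
    have h2 : (G.neighborFinset x \ S).card ≤ (Finset.univ \ S).card :=
      Finset.card_le_card (Finset.sdiff_subset_sdiff (Finset.subset_univ _) (le_refl _))
    have h3 : (Finset.univ \ S).card = Fintype.card V - S.card := by
      rw [Finset.card_sdiff_of_subset (Finset.subset_univ S), Finset.card_univ]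
    have h4 : S.card ≤ Fintype.card V := Finset.card_le_univ S
    have h5 := Finset.card_sdiff_add_card_inter S (insert x (G.neighborFinset x))
    have h6 : S ∩ insert x (G.neighborFinset x) = insert x (S ∩ G.neighborFinset x) :=
      Finset.inter_insert_of_mem hx
    have h7 : x ∉ S ∩ G.neighborFinset x := by simp
    have h8 : (insert x (S ∩ G.neighborFinset x)).card = (S ∩ G.neighborFinset x).card + 1 :=
      Finset.card_insert_of_notMem h7
    have h9 : (S ∩ G.neighborFinset x).card = (G.neighborFinset x ∩ S).card := by
      rw [Finset.inter_comm]
    have h10 := hdeg x hx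
    rw [h6, h8] at h5
    omega
  have hm' : 3 * (G.minDegree - 1) + 3 ≤ S.card := by omega
  obtain ⟨l, hc, hnd, hh, hl, hlen, hmemS⟩ :=
    core_lemma G S (G.minDegree - 1) hd hm' u v hu hv huv ℓ hℓ2 (by omega)
  obtain ⟨p, hp⟩ := walk_of_list G l u v hc hh hl
  refine ⟨p, ?_, ?_, ?_⟩
  · rw [SimpleGraph.Walk.isPath_def, hp]
    exact hnd
  · have h1 := p.length_support
    rw [hp, hlen] at h1
    omega
  · intro x hx
    rw [hp] at hx
    exact hmemS x hx
end
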